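/- ∫_0^{π/2} x · sin(2x) / (x² + ln²(2 cos x)) dx = 13π/48. -/

import Mathlib

open Real Complex Set Metric Filter intervalIntegral

noncomputable def rr (w : ℂ) : ℂ := (Complex.log (1 + w))⁻¹ - w⁻¹ - 1/2 + w/12
noncomputable def RR (w : ℂ) : ℂ := rr w / w^2
noncomputable def R1 : ℂ → ℂ := Function.update RR 0 (limUnder (nhdsWithin 0 {0}ᶜ) RR)
noncomputable def GG (w : ℂ) : ℂ := -Complex.I * (w^2 - 1) * R1 w
noncomputable def V (θ : ℝ) : ℂ :=
  (Complex.exp (θ*Complex.I) - (Complex.exp (θ*Complex.I))⁻¹) * rr (Complex.exp (θ*Complex.I))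
noncomputable def u (x : ℝ) : ℝ := Real.sin (2*x) * (rr (Complex.exp (2*(x:ℂ)*Complex.I))).im

lemma one_add_exp (x : ℝ) :
    1 + Complex.exp (2 * (x:ℂ) * Complex.I)
      = ((2 * Real.cos x : ℝ) : ℂ) * (Real.cos x + Real.sin x * Complex.I) := by
  rw [Complex.exp_mul_I]
  apply Complex.ext <;>
    simp [Complex.cos_ofReal_re, Complex.sin_ofReal_re, ← Complex.ofReal_ofNat,
      ← Complex.ofReal_mul, Real.cos_two_mul, Real.sin_two_mul] <;> ring

lemma log_one_add_exp {x : ℝ} (hx : x ∈ Set.Ioo 0 (π/2)) :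
    Complex.log (1 + Complex.exp (2 * (x:ℂ) * Complex.I))
      = ((Real.log (2 * Real.cos x) : ℝ) : ℂ) + (x:ℂ) * Complex.I := by
  have hcos : 0 < Real.cos x :=
    Real.cos_pos_of_mem_Ioo ⟨by linarith [hx.1, Real.pi_pos], hx.2⟩
  have hr : (0:ℝ) < 2 * Real.cos x := by linarith
  have hθ : x ∈ Set.Ioc (-π) π := ⟨by linarith [hx.1, Real.pi_pos], by linarith [hx.2, Real.pi_pos]⟩
  rw [one_add_exp]
  rw [Complex.ofReal_cos, Complex.ofReal_sin]
  apply Complex.ext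
  · rw [Complex.log_re, Complex.add_re]
    rw [norm_mul, Complex.norm_real, Complex.norm_cos_add_sin_mul_I, Real.norm_of_nonneg hr.le]
    simp
  · rw [Complex.log_im, Complex.arg_mul_cos_add_sin_mul_I hr hθ]
    simp

lemma slit_of_small {z : ℂ} (hz : ‖z‖ ≤ 1/2) : 1 + z ∈ Complex.slitPlane := by
  refine Complex.mem_slitPlane_iff.2 (Or.inl ?_)
  have : |z.re| ≤ ‖z‖ := Complex.abs_re_le_norm z
  simp only [Complex.add_re, Complex.one_re]
  have := abs_le.1 this
  linarith

lemma hasDerivAt_log1p {z : ℂ} (hz : ‖z‖ ≤ 1/2) :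
    HasDerivAt (fun w => Complex.log (1 + w) - (w - w^2/2 + w^3/3))
      (-z^3/(1+z)) z := by
  have h1 : (1:ℂ) + z ≠ 0 := by
    intro h
    have : ‖(1:ℂ) + z‖ = 0 := by rw [h]; simp
    have h2 : (1:ℝ) - ‖z‖ ≤ ‖(1:ℂ)+z‖ := by
      have := norm_sub_norm_le (1:ℂ) (-z)
      simpa [sub_neg_eq_add] using this
    rw [this] at h2; linarith
  have hd1 : HasDerivAt (fun w : ℂ => Complex.log (1 + w)) ((1+z)⁻¹) z := by
    have := (Complex.hasDerivAt_log (slit_of_small hz)).comp z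
      ((hasDerivAt_id z).const_add 1)
    simpa [Function.comp_def] using this
  have hd2 : HasDerivAt (fun w : ℂ => w - w^2/2 + w^3/3) (1 - z + z^2) z := by
    have h := ((hasDerivAt_id z).sub (((hasDerivAt_id z).pow 2).div_const 2)).add
      (((hasDerivAt_id z).pow 3).div_const 3)
    exact h.congr_deriv (by simp)
  have := hd1.sub hd2
  exact this.congr_deriv (by field_simp; ring)

lemma log_taylor4 {w : ℂ} (hw : ‖w‖ ≤ 1/2) :
    ‖Complex.log (1+w) - (w - w^2/2 + w^3/3)‖ ≤ 2 * ‖w‖^4 := by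
  set g : ℂ → ℂ := fun z => Complex.log (1 + z) - (z - z^2/2 + z^3/3) with hg
  have key : ‖g w - g 0‖ ≤ (2 * ‖w‖^3) * ‖w - 0‖ := by
    apply Convex.norm_image_sub_le_of_norm_hasDerivWithin_le
      (f' := fun z => -z^3/(1+z)) (s := closedBall (0:ℂ) ‖w‖)
    · intro z hz
      simp only [mem_closedBall, dist_zero_right] at hz
      exact (hasDerivAt_log1p (hz.trans hw)).hasDerivWithinAt
    · intro z hz
      simp only [mem_closedBall, dist_zero_right] at hz
      have hz2 : ‖z‖ ≤ 1/2 := hz.trans hw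
      have h2 : (1:ℝ)/2 ≤ ‖(1:ℂ)+z‖ := by
        have := norm_sub_norm_le (1:ℂ) (-z)
        simp only [sub_neg_eq_add, norm_one, norm_neg] at this
        linarith
      rw [norm_div, norm_neg, norm_pow]
      have h3 : ‖z‖^3 ≤ ‖w‖^3 := pow_le_pow_left₀ (norm_nonneg _) hz 3
      rw [div_le_iff₀ (by linarith : (0:ℝ) < ‖(1:ℂ)+z‖)]
      nlinarith [pow_nonneg (norm_nonneg w) 3]
    · exact convex_closedBall _ _
    · simp
    · simp
  have g0 : g 0 = 0 := by simp [hg]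
  rw [g0, sub_zero, sub_zero] at key
  calc ‖g w‖ ≤ 2 * ‖w‖^3 * ‖w‖ := key
    _ = 2 * ‖w‖^4 := by ring

lemma norm_log1p_ge {w : ℂ} (hw : ‖w‖ ≤ 1/4) : ‖w‖/2 ≤ ‖Complex.log (1+w)‖ := by
  have h := log_taylor4 (by linarith : ‖w‖ ≤ 1/2)
  have h2 : ‖(w - w^2/2 + w^3/3)‖ - ‖Complex.log (1+w) - (w - w^2/2 + w^3/3)‖
      ≤ ‖Complex.log (1+w)‖ := by
    have := norm_sub_norm_le (w - w^2/2 + w^3/3) (w - w^2/2 + w^3/3 - Complex.log (1+w))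
    rw [norm_sub_rev] at h ⊢
    simpa using this
  have h3 : ‖w‖ - ‖w‖^2/2 - ‖w‖^3/3 ≤ ‖w - w^2/2 + w^3/3‖ := by
    have t1 : ‖w - w^2/2 + w^3/3‖ ≥ ‖w‖ - ‖w^2/2 - w^3/3‖ := by
      have := norm_sub_norm_le w (w^2/2 - w^3/3)
      calc ‖w - w^2/2 + w^3/3‖ = ‖w - (w^2/2 - w^3/3)‖ := by ring_nf
        _ ≥ ‖w‖ - ‖w^2/2 - w^3/3‖ := this
    have t2 : ‖w^2/2 - w^3/3‖ ≤ ‖w‖^2/2 + ‖w‖^3/3 := by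
      calc ‖w^2/2 - w^3/3‖ ≤ ‖w^2/2‖ + ‖w^3/3‖ := norm_sub_le _ _
        _ = ‖w‖^2/2 + ‖w‖^3/3 := by simp [norm_div, norm_pow]
    linarith
  have hn : (0:ℝ) ≤ ‖w‖ := norm_nonneg w
  nlinarith [pow_nonneg hn 2, pow_nonneg hn 3, pow_nonneg hn 4]

lemma log1p_ne_zero {z : ℂ} (h0 : z ≠ 0) (hz : ‖z‖ < 1) : Complex.log (1+z) ≠ 0 := by
  intro h
  have h1 : (1:ℂ) + z ≠ 0 := by
    intro hc
    have : ‖(1:ℂ)+z‖ = 0 := by rw [hc]; simp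
    have h2 : (1:ℝ) - ‖z‖ ≤ ‖(1:ℂ)+z‖ := by
      have := norm_sub_norm_le (1:ℂ) (-z)
      simpa [sub_neg_eq_add] using this
    rw [this] at h2; linarith
  have := Complex.exp_log h1
  rw [h, Complex.exp_zero] at this
  exact h0 (by linear_combination -this)

lemma norm_RR_le {w : ℂ} (h0 : w ≠ 0) (hw : ‖w‖ ≤ 1/4) : ‖RR w‖ ≤ 34 := by
  set L := Complex.log (1+w) with hLdef
  have hLlow := norm_log1p_ge hw
  have hwpos : 0 < ‖w‖ := norm_pos_iff.2 h0
  have hL : L ≠ 0 := log1p_ne_zero h0 (by linarith)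
  have hid : rr w = (12*w - L*(12 + 6*w - w^2)) / (12 * w * L) := by
    rw [rr, ← hLdef]
    field_simp
    ring
  have hN : 12*w - L*(12+6*w-w^2)
      = (-(5/2)*w^4 + (1/3)*w^5) - (L - (w - w^2/2 + w^3/3))*(12+6*w-w^2) := by ring
  have hE := log_taylor4 (by linarith : ‖w‖ ≤ 1/2)
  have hpoly : ‖(12:ℂ)+6*w-w^2‖ ≤ 16 := by
    calc ‖(12:ℂ)+6*w-w^2‖ ≤ ‖(12:ℂ)+6*w‖ + ‖w^2‖ := norm_sub_le _ _
      _ ≤ ‖(12:ℂ)‖ + ‖6*w‖ + ‖w‖^2 := by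
          have := norm_add_le (12:ℂ) (6*w); simp only [norm_pow]; linarith
      _ ≤ 16 := by
          have h6 : ‖(6:ℂ)*w‖ = 6*‖w‖ := by
            rw [norm_mul]; norm_num
          rw [h6]
          have h12n : ‖(12:ℂ)‖ = 12 := by norm_num
          rw [h12n]
          nlinarith [norm_nonneg w]
  have hNbound : ‖12*w - L*(12+6*w-w^2)‖ ≤ 35 * ‖w‖^4 := by
    rw [hN]
    calc ‖(-(5/2)*w^4 + (1/3)*w^5) - (L - (w - w^2/2 + w^3/3))*(12+6*w-w^2)‖
        ≤ ‖(-(5/2):ℂ)*w^4 + (1/3)*w^5‖ + ‖(L - (w - w^2/2 + w^3/3))*(12+6*w-w^2)‖ :=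
          norm_sub_le _ _
      _ ≤ (5/2)*‖w‖^4 + (1/3)*‖w‖^5 + (2*‖w‖^4) * 16 := by
          have t1 : ‖(-(5/2):ℂ)*w^4 + (1/3)*w^5‖ ≤ (5/2)*‖w‖^4 + (1/3)*‖w‖^5 := by
            calc ‖(-(5/2):ℂ)*w^4 + (1/3)*w^5‖ ≤ ‖(-(5/2):ℂ)*w^4‖ + ‖(1/3:ℂ)*w^5‖ := norm_add_le _ _
              _ = (5/2)*‖w‖^4 + (1/3)*‖w‖^5 := by
                  rw [norm_mul, norm_mul, norm_pow, norm_pow]; norm_num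
          have t2 : ‖(L - (w - w^2/2 + w^3/3))*(12+6*w-w^2)‖ ≤ (2*‖w‖^4) * 16 := by
            rw [norm_mul]
            apply mul_le_mul hE hpoly (norm_nonneg _) (by positivity)
          linarith
      _ ≤ 35 * ‖w‖^4 := by
          have h5 : ‖w‖^5 ≤ ‖w‖^4 * (1/4) := by
            rw [pow_succ]
            exact mul_le_mul_of_nonneg_left hw (by positivity)
          nlinarith [pow_nonneg (norm_nonneg w) 4]
  have hLpos : 0 < ‖L‖ := norm_pos_iff.2 hL
  have hRw : RR w = (12*w - L*(12 + 6*w - w^2)) / ((12 * w * L) * w^2) := by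
    rw [RR, hid, div_div]
  rw [hRw, norm_div]
  have hden : ‖(12 * w * L) * w^2‖ = 12 * ‖w‖ * ‖L‖ * ‖w‖^2 := by
    rw [norm_mul, norm_mul, norm_mul, norm_pow]; norm_num
  rw [hden]
  rw [div_le_iff₀ (by positivity)]
  have hd2 : 6*‖w‖^4 ≤ 12*‖w‖*‖L‖*‖w‖^2 := by
    have hmul := mul_le_mul_of_nonneg_left hLlow
      (by positivity : (0:ℝ) ≤ 12*‖w‖*‖w‖^2)
    nlinarith [hmul]
  calc ‖12*w - L*(12+6*w-w^2)‖ ≤ 35 * ‖w‖^4 := hNbound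
    _ ≤ 34 * (12*‖w‖*‖L‖*‖w‖^2) := by nlinarith [pow_nonneg (norm_nonneg w) 4]

lemma log1p_ne_zero' {z : ℂ} (h0 : z ≠ 0) (h1 : (1:ℂ)+z ≠ 0) : Complex.log (1+z) ≠ 0 := by
  intro h
  have := Complex.exp_log h1
  rw [h, Complex.exp_zero] at this
  exact h0 (by linear_combination -this)

lemma one_add_ne {z : ℂ} (hz : ‖z‖ < 1) : (1:ℂ) + z ≠ 0 := by
  intro hc
  have h2 : (1:ℝ) - ‖z‖ ≤ ‖(1:ℂ)+z‖ := by
    have := norm_sub_norm_le (1:ℂ) (-z)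
    simpa [sub_neg_eq_add] using this
  rw [hc] at h2
  simp only [norm_zero] at h2
  linarith

lemma slit_mem {z : ℂ} (hz : ‖z‖ ≤ 1) (hne : z ≠ -1) : 1 + z ∈ Complex.slitPlane := by
  rw [Complex.mem_slitPlane_iff]
  by_cases him : z.im = 0
  · left
    have hre : |z.re| ≤ ‖z‖ := Complex.abs_re_le_norm z
    have h1 : -1 ≤ z.re := by
      have := abs_le.1 (hre.trans hz); linarith [this.1]
    rcases eq_or_lt_of_le h1 with h | h
    · exfalso; apply hne; apply Complex.ext <;> simp [← h, him]
    · simp only [Complex.add_re, Complex.one_re]; linarith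
  · right; simpa using him

lemma tendsto_inv_log_zero :
    Filter.Tendsto (fun z : ℂ => (Complex.log z)⁻¹) (nhds 0) (nhds 0) := by
  apply squeeze_zero_norm' (a := fun z : ℂ => |Real.log (‖z‖)|⁻¹)
  · filter_upwards [Metric.ball_mem_nhds (0:ℂ) one_pos] with z hz
    simp only [mem_ball, dist_zero_right] at hz
    by_cases h0 : z = 0
    · simp [h0, Complex.log_zero]
    · have habs : 0 < ‖z‖ := norm_pos_iff.mpr h0
      have hlt : ‖z‖ < 1 := by simpa using hz
      have hlog : Real.log (‖z‖) < 0 := Real.log_neg habs hlt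
      have hre : |Real.log (‖z‖)| ≤ ‖Complex.log z‖ := by
        rw [← Complex.log_re]
        exact Complex.abs_re_le_norm _
      rw [norm_inv]
      apply inv_anti₀ (by rw [abs_of_neg hlog]; linarith) hre
  · have hdecomp : nhdsWithin (0:ℂ) {0}ᶜ ⊔ pure 0 = nhds 0 := by
      rw [← nhdsWithin_singleton, ← nhdsWithin_union, compl_union_self, nhdsWithin_univ]
    rw [← hdecomp]
    rw [Filter.tendsto_sup]
    constructor
    · have h1 : Filter.Tendsto (fun z : ℂ => ‖z‖)
          (nhdsWithin 0 {0}ᶜ) (nhdsWithin 0 {0}ᶜ) := by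
        rw [tendsto_nhdsWithin_iff]
        constructor
        · apply Filter.Tendsto.mono_left _ nhdsWithin_le_nhds
          simpa using continuous_norm.tendsto (0:ℂ)
        · filter_upwards [self_mem_nhdsWithin] with z hz
          simpa using norm_ne_zero_iff.mpr hz
      have h2 := Real.tendsto_log_nhdsNE_zero.comp h1
      have h3 := (tendsto_abs_atBot_atTop).comp h2
      have h4 := (tendsto_inv_atTop_zero).comp h3
      exact h4
    · have : (fun z : ℂ => |Real.log (‖z‖)|⁻¹) 0 = 0 := by simp
      rw [Filter.tendsto_pure_left]
      intro s hs
      simpa [this] using mem_of_mem_nhds hs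

lemma invlog_contAt {z : ℂ} (hz : ‖z‖ ≤ 1) (h0 : z ≠ 0) :
    ContinuousAt (fun w : ℂ => (Complex.log (1+w))⁻¹) z := by
  by_cases hm1 : z = -1
  · subst hm1
    have hin : Filter.Tendsto (fun w : ℂ => 1 + w) (nhds (-1 : ℂ)) (nhds 0) := by
      have hco : Continuous (fun w : ℂ => 1 + w) := continuous_const.add continuous_id
      have := hco.tendsto (-1 : ℂ)
      simpa using this
    have hcomp := tendsto_inv_log_zero.comp hin
    have hval : (fun w : ℂ => (Complex.log (1+w))⁻¹) (-1) = 0 := by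
      simp [Complex.log_zero]
    unfold ContinuousAt
    rw [hval]
    exact hcomp
  · have hslit : 1 + z ∈ Complex.slitPlane := slit_mem hz hm1
    have hlogne : Complex.log (1+z) ≠ 0 := log1p_ne_zero' h0
      (fun hc => hm1 (by linear_combination hc))
    have hlc : ContinuousAt (fun w : ℂ => Complex.log (1+w)) z := by
      have := (continuousAt_clog hslit).comp
        ((continuous_const.add continuous_id).continuousAt (x := z))
      simpa [Function.comp_def] using this
    exact hlc.inv₀ hlogne

lemma RR_diffAt {z : ℂ} (h0 : z ≠ 0) (hz : ‖z‖ < 1) : DifferentiableAt ℂ RR z := by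
  have hslit : 1 + z ∈ Complex.slitPlane := by
    apply slit_mem hz.le
    intro hc
    rw [hc] at hz; simp at hz
  have hlog : DifferentiableAt ℂ (fun w : ℂ => Complex.log (1+w)) z := by
    have := (Complex.differentiableAt_log hslit).comp z
      ((differentiable_id.const_add 1).differentiableAt)
    simpa [Function.comp_def] using this
  have hlogne : Complex.log (1+z) ≠ 0 := log1p_ne_zero' h0 (one_add_ne hz)
  have hrr : DifferentiableAt ℂ rr z := by
    unfold rr
    apply DifferentiableAt.add
    apply DifferentiableAt.sub
    apply DifferentiableAt.sub
    · exact hlog.inv hlogne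
    · exact differentiableAt_id.inv h0
    · exact differentiableAt_const _
    · exact (differentiableAt_id).div_const _
  exact hrr.div (differentiableAt_id.pow 2) (pow_ne_zero 2 h0)

lemma R1_diffOn : DifferentiableOn ℂ R1 (ball 0 (1/4)) := by
  apply Complex.differentiableOn_update_limUnder_of_bddAbove
    (Metric.ball_mem_nhds 0 (by norm_num))
  · intro z hz
    obtain ⟨hz1, hz2⟩ := hz
    simp only [mem_ball, dist_zero_right] at hz1
    have h0 : z ≠ 0 := by simpa using hz2
    exact (RR_diffAt h0 (by linarith)).differentiableWithinAt
  · refine ⟨34, ?_⟩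
    rintro x ⟨z, ⟨hz1, hz2⟩, rfl⟩
    simp only [mem_ball, dist_zero_right] at hz1
    have h0 : z ≠ 0 := by simpa using hz2
    exact norm_RR_le h0 (by linarith)

lemma GG_contOn : ContinuousOn GG (closedBall 0 1) := by
  intro z hz
  simp only [mem_closedBall, dist_zero_right] at hz
  by_cases h0 : z = 0
  · subst h0
    have hc : ContinuousAt R1 0 := by
      have := R1_diffOn.continuousOn
      exact this.continuousAt (Metric.ball_mem_nhds 0 (by norm_num))
    exact (((continuous_const.mul ((continuous_pow 2).sub continuous_const)).continuousAt).mul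
      hc).continuousWithinAt
  · have hev : GG =ᶠ[nhds z] (fun w => -Complex.I * (w^2 - 1) * RR w) := by
      filter_upwards [IsOpen.mem_nhds isOpen_compl_singleton (h0 : z ∈ ({0}ᶜ : Set ℂ))] with w hw
      simp only [GG, R1]
      rw [Function.update_of_ne (by simpa using hw)]
    apply ContinuousWithinAt.congr_of_eventuallyEq _ (hev.filter_mono nhdsWithin_le_nhds)
      (by simp [GG, R1, Function.update_of_ne h0])
    apply ContinuousWithinAt.mul
    · exact ((continuous_const.mul ((continuous_pow 2).sub continuous_const)).continuousAt).continuousWithinAt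
    · -- continuity of RR at z within closedBall
      have hinvlog : ContinuousAt (fun w : ℂ => (Complex.log (1+w))⁻¹) z := by
        by_cases hm1 : z = -1
        · subst hm1
          have hin : Filter.Tendsto (fun w : ℂ => 1 + w) (nhds (-1 : ℂ)) (nhds 0) := by
            have hco : Continuous (fun w : ℂ => 1 + w) := continuous_const.add continuous_id
            have := hco.tendsto (-1 : ℂ)
            simpa using this
          have hcomp := tendsto_inv_log_zero.comp hin
          have hval : (fun w : ℂ => (Complex.log (1+w))⁻¹) (-1) = 0 := by
            simp [Complex.log_zero]
          unfold ContinuousAt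
          rw [hval]
          exact hcomp
        · have hslit : 1 + z ∈ Complex.slitPlane := slit_mem hz hm1
          have hlogne : Complex.log (1+z) ≠ 0 := log1p_ne_zero' h0
            (fun hc => hm1 (by linear_combination hc))
          have hlc : ContinuousAt (fun w : ℂ => Complex.log (1+w)) z := by
            have := (continuousAt_clog hslit).comp
              ((continuous_const.add continuous_id).continuousAt (x := z))
            simpa [Function.comp_def] using this
          exact hlc.inv₀ hlogne
      have hrrc : ContinuousAt rr z := by
        unfold rr
        apply ContinuousAt.add
        apply ContinuousAt.sub
        apply ContinuousAt.sub
        · exact hinvlog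
        · exact continuousAt_id.inv₀ h0
        · exact continuousAt_const
        · exact continuousAt_id.div_const _
      exact ((hrrc.div ((continuous_pow 2).continuousAt) (pow_ne_zero 2 h0))).continuousWithinAt

lemma circle_GG_zero : (∮ z in C((0:ℂ), (1:ℝ)), GG z) = 0 := by
  apply Complex.circleIntegral_eq_zero_of_differentiable_on_off_countable zero_le_one
    (Set.countable_singleton 0) GG_contOn
  intro z hz
  obtain ⟨hz1, hz2⟩ := hz
  simp only [mem_ball, dist_zero_right] at hz1
  have h0 : z ≠ 0 := by simpa using hz2
  by_cases hsmall : z ∈ ball (0:ℂ) (1/4)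
  · -- differentiability from R1_diffOn
    have h1 := (R1_diffOn z hsmall).differentiableAt
      (IsOpen.mem_nhds isOpen_ball hsmall)
    exact (differentiableAt_const _ |>.mul ((differentiableAt_id.pow 2).sub
      (differentiableAt_const _))).mul h1
  · have hev : GG =ᶠ[nhds z] (fun w => -Complex.I * (w^2 - 1) * RR w) := by
      filter_upwards [IsOpen.mem_nhds isOpen_compl_singleton (h0 : z ∈ ({0}ᶜ : Set ℂ))] with w hw
      simp only [GG, R1]
      rw [Function.update_of_ne (by simpa using hw)]
    rw [hev.differentiableAt_iff]
    exact (differentiableAt_const _ |>.mul ((differentiableAt_id.pow 2).sub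
      (differentiableAt_const _))).mul (RR_diffAt h0 hz1)

lemma intV_zero : (∫ θ in (0:ℝ)..(2*π), V θ) = 0 := by
  have h := circle_GG_zero
  rw [circleIntegral] at h
  rw [← h]
  apply intervalIntegral.integral_congr
  intro θ _
  have hw : circleMap 0 1 θ = Complex.exp (θ*Complex.I) := by
    simp [circleMap]
  have hwne : Complex.exp (θ*Complex.I) ≠ 0 := Complex.exp_ne_zero _
  show V θ = deriv (circleMap 0 1) θ • GG (circleMap 0 1 θ)
  rw [deriv_circleMap, hw]
  simp only [smul_eq_mul, GG, R1]
  rw [Function.update_of_ne hwne]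
  unfold V RR
  field_simp
  have hI : (Complex.I : ℂ) * Complex.I = -1 := Complex.I_mul_I
  linear_combination ((cexp (↑θ * Complex.I) ^ 2 - 1) *
    rr (cexp (↑θ * Complex.I))) * hI

lemma rr_contAt {z : ℂ} (hz : ‖z‖ ≤ 1) (h0 : z ≠ 0) : ContinuousAt rr z := by
  unfold rr
  apply ContinuousAt.add
  apply ContinuousAt.sub
  apply ContinuousAt.sub
  · exact invlog_contAt hz h0
  · exact continuousAt_id.inv₀ h0
  · exact continuousAt_const
  · exact continuousAt_id.div_const _

lemma exp_cont : Continuous (fun θ : ℝ => Complex.exp (θ*Complex.I)) := by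
  apply Complex.continuous_exp.comp
  exact (Complex.continuous_ofReal.mul continuous_const)

lemma exp_norm_one (θ : ℝ) : ‖Complex.exp (θ*Complex.I)‖ = 1 := by
  exact Complex.norm_exp_ofReal_mul_I θ

lemma V_cont : Continuous V := by
  rw [continuous_iff_continuousAt]
  intro θ
  unfold V
  have h0 : Complex.exp (θ*Complex.I) ≠ 0 := Complex.exp_ne_zero _
  have hrr : ContinuousAt (fun x : ℝ => rr (Complex.exp (x*Complex.I))) θ := by
    have h := ContinuousAt.comp (x := θ) (rr_contAt (by rw [exp_norm_one]) h0)
      exp_cont.continuousAt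
    simpa [Function.comp_def] using h
  exact ((exp_cont.continuousAt).sub ((exp_cont.continuousAt).inv₀ h0)).mul hrr

lemma u_cont : Continuous u := by
  rw [continuous_iff_continuousAt]
  intro x
  unfold u
  have hcoe : ∀ y : ℝ, 2*(y:ℂ)*Complex.I = ((2*y : ℝ):ℂ)*Complex.I := by
    intro y; push_cast; ring
  have h0 : Complex.exp (2*(x:ℂ)*Complex.I) ≠ 0 := Complex.exp_ne_zero _
  have hexp2 : Continuous (fun y : ℝ => Complex.exp (2*(y:ℂ)*Complex.I)) := by
    apply Complex.continuous_exp.comp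
    exact ((continuous_const.mul Complex.continuous_ofReal).mul continuous_const)
  have hrr : ContinuousAt (fun y : ℝ => rr (Complex.exp (2*(y:ℂ)*Complex.I))) x := by
    have h := ContinuousAt.comp (x := x)
      (rr_contAt (by rw [hcoe x, exp_norm_one]) h0) hexp2.continuousAt
    simpa [Function.comp_def] using h
  exact ((Real.continuous_sin.comp (continuous_const.mul continuous_id)).continuousAt).mul
    (Complex.continuous_im.continuousAt.comp hrr)

lemma exp_sub_inv (t : ℝ) :
    Complex.exp ((t:ℂ)*Complex.I) - (Complex.exp ((t:ℂ)*Complex.I))⁻¹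
      = ((2*Real.sin t : ℝ):ℂ)*Complex.I := by
  rw [← Complex.exp_neg]
  rw [show -((t:ℂ)*Complex.I) = ((-t : ℝ):ℂ)*Complex.I from by push_cast; ring]
  apply Complex.ext
  · simp only [Complex.sub_re, Complex.exp_ofReal_mul_I_re, Real.cos_neg,
      Complex.re_ofReal_mul, Complex.I_re, mul_zero, sub_self]
  · simp only [Complex.sub_im, Complex.exp_ofReal_mul_I_im, Real.sin_neg,
      Complex.im_ofReal_mul, Complex.I_im, mul_one]
    ring

lemma u_eq (x : ℝ) : u x = -(V (2*x)).re / 2 := by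
  unfold u V
  rw [exp_sub_inv (2*x)]
  rw [show (((2*x):ℝ):ℂ) = 2*(x:ℂ) from by push_cast; ring]
  have hre : ∀ z : ℂ, (((2*Real.sin (2*x) : ℝ):ℂ)*Complex.I*z).re
      = 2*Real.sin (2*x) * (-z.im) := by
    intro z
    rw [mul_assoc, Complex.re_ofReal_mul]
    simp [Complex.mul_re]
  rw [hre]
  ring

lemma u_symm (x : ℝ) : u (π - x) = u x := by
  unfold u
  have hsin : Real.sin (2*(π - x)) = -Real.sin (2*x) := by
    rw [show 2*(π-x) = 2*π - 2*x by ring, Real.sin_two_pi_sub]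
  have hexp : Complex.exp (2*((π - x : ℝ):ℂ)*Complex.I)
      = starRingEnd ℂ (Complex.exp (2*(x:ℂ)*Complex.I)) := by
    rw [← Complex.exp_conj]
    have hconj : (starRingEnd ℂ) (2*(x:ℂ)*Complex.I) = -(2*(x:ℂ)*Complex.I) := by
      rw [map_mul, map_mul, Complex.conj_I, Complex.conj_ofReal, map_ofNat]
      ring
    rw [hconj]
    rw [show 2*((π - x : ℝ):ℂ)*Complex.I = 2*(π:ℂ)*Complex.I + -(2*(x:ℂ)*Complex.I) by
      push_cast; ring]
    rw [Complex.exp_add, Complex.exp_two_pi_mul_I, one_mul]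
  rw [hsin, hexp]
  set w := Complex.exp (2*(x:ℂ)*Complex.I) with hwdef
  have hargne : (1 + w).arg ≠ π := by
    simp only [ne_eq, Complex.arg_eq_pi_iff, not_and]
    push_neg
    intro hre
    exfalso
    have : w.re = Real.cos (2*x) := by
      rw [hwdef, show 2*(x:ℂ)*Complex.I = (((2*x):ℝ):ℂ)*Complex.I by push_cast; ring]
      exact Complex.exp_ofReal_mul_I_re _
    rw [Complex.add_re, Complex.one_re, this] at hre
    nlinarith [Real.neg_one_le_cos (2*x)]
  have hrrconj : rr (starRingEnd ℂ w) = starRingEnd ℂ (rr w) := by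
    unfold rr
    have h1 : (1 : ℂ) + starRingEnd ℂ w = starRingEnd ℂ (1 + w) := by
      simp [map_add]
    rw [h1, Complex.log_conj _ hargne]
    simp [map_sub, map_add, map_inv₀, map_div₀, map_ofNat]
  rw [hrrconj]
  simp [Complex.conj_im]

lemma int_u_total : (∫ x in (0:ℝ)..π, u x) = 0 := by
  have hVc : Continuous (fun x : ℝ => V (2*x)) := V_cont.comp (continuous_const.mul continuous_id)
  have h1 : (∫ x in (0:ℝ)..π, V (2*x)) = 0 := by
    have := intervalIntegral.integral_comp_mul_left (a := 0) (b := π) (f := V)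
      (c := 2) (by norm_num)
    rw [mul_zero] at this
    rw [this, intV_zero, smul_zero]
  have h2 : (∫ x in (0:ℝ)..π, (V (2*x)).re) = 0 := by
    have hint : IntervalIntegrable (fun x : ℝ => V (2*x)) MeasureTheory.volume 0 π :=
      hVc.intervalIntegrable 0 π
    have := ContinuousLinearMap.intervalIntegral_comp_comm Complex.reCLM hint
    simp only [Complex.reCLM_apply] at this
    rw [this, h1]
    simp
  calc (∫ x in (0:ℝ)..π, u x) = ∫ x in (0:ℝ)..π, -(V (2*x)).re / 2 := by
        apply intervalIntegral.integral_congr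
        intro x _
        exact u_eq x
    _ = -(∫ x in (0:ℝ)..π, (V (2*x)).re) / 2 := by
        rw [intervalIntegral.integral_div, intervalIntegral.integral_neg]
    _ = 0 := by rw [h2]; norm_num

lemma int_u_half : (∫ x in (0:ℝ)..(π/2), u x) = 0 := by
  have hu2 : IntervalIntegrable u MeasureTheory.volume 0 (π/2) :=
    u_cont.intervalIntegrable _ _
  have hu3 : IntervalIntegrable u MeasureTheory.volume (π/2) π :=
    u_cont.intervalIntegrable _ _
  have hsplit : (∫ x in (0:ℝ)..(π/2), u x) + (∫ x in (π/2:ℝ)..π, u x)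
      = ∫ x in (0:ℝ)..π, u x :=
    intervalIntegral.integral_add_adjacent_intervals hu2 hu3
  have hsym : (∫ x in (π/2:ℝ)..π, u x) = ∫ x in (0:ℝ)..(π/2), u x := by
    have h1 : (∫ x in (π/2:ℝ)..π, u (π - x)) = ∫ x in (π - π:ℝ)..(π - π/2), u x :=
      intervalIntegral.integral_comp_sub_left u π
    rw [show π - π = (0:ℝ) by ring, show π - π/2 = π/2 by ring] at h1
    rw [← h1]
    apply intervalIntegral.integral_congr
    intro x _
    exact (u_symm x).symm
  rw [hsym] at hsplit
  rw [int_u_total] at hsplit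
  linarith

lemma pointwise_id {x : ℝ} (hx : x ∈ Set.Icc 0 (π/2)) :
    x * Real.sin (2 * x) / (x ^ 2 + Real.log (2 * Real.cos x) ^ 2)
      = 13/24 - 13/24 * Real.cos (4*x) - u x := by
  obtain ⟨hx0, hx1⟩ := hx
  rcases eq_or_lt_of_le hx0 with h0 | h0
  · simp [← h0, u]
  rcases eq_or_lt_of_le hx1 with h1 | h1
  · rw [h1]
    unfold u
    rw [show 2*(π/2) = π by ring, show 4*(π/2) = 2*π by ring]
    simp [Real.sin_pi, Real.cos_two_pi]
  -- main case
  unfold u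
  have hlog := log_one_add_exp ⟨h0, h1⟩
  set L := Real.log (2 * Real.cos x) with hL
  set w := Complex.exp (2*(x:ℂ)*Complex.I) with hw
  have hwre : w.re = Real.cos (2*x) := by
    rw [hw, show 2*(x:ℂ)*Complex.I = (((2*x):ℝ):ℂ)*Complex.I from by push_cast; ring]
    exact Complex.exp_ofReal_mul_I_re _
  have hwim : w.im = Real.sin (2*x) := by
    rw [hw, show 2*(x:ℂ)*Complex.I = (((2*x):ℝ):ℂ)*Complex.I from by push_cast; ring]
    exact Complex.exp_ofReal_mul_I_im _
  have hwnormsq : Complex.normSq w = 1 := by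
    have : ‖w‖ = 1 := by
      rw [hw, show 2*(x:ℂ)*Complex.I = (((2*x):ℝ):ℂ)*Complex.I from by push_cast; ring]
      exact Complex.norm_exp_ofReal_mul_I _
    rw [← Complex.sq_norm, this]; norm_num
  have him_inv_log : ((Complex.log (1 + w))⁻¹).im = -x / (L^2 + x^2) := by
    rw [hlog]
    rw [Complex.inv_im]
    congr 1
    · simp
    · simp [Complex.normSq_apply]
      ring
  have him_inv_w : (w⁻¹).im = -Real.sin (2*x) := by
    rw [Complex.inv_im, hwim, hwnormsq]
    simp
  have him_rr : (rr w).im = -x/(L^2+x^2) + Real.sin (2*x) + Real.sin (2*x)/12 := by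
    unfold rr
    rw [Complex.add_im, Complex.sub_im, Complex.sub_im, him_inv_log, him_inv_w]
    have h12 : (w/12).im = Real.sin (2*x)/12 := by
      rw [show (12:ℂ) = ((12:ℝ):ℂ) from by norm_num, Complex.div_ofReal_im, hwim]
    rw [h12]
    have hhalf : ((1:ℂ)/2).im = 0 := by norm_num
    rw [hhalf]
    ring
  rw [him_rr]
  have hden : L^2 + x^2 ≠ 0 := by positivity
  have hcos4 : Real.cos (4*x) = 1 - 2 * Real.sin (2*x)^2 := by
    rw [show (4:ℝ)*x = 2*(2*x) by ring, Real.cos_two_mul]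
    have := Real.sin_sq_add_cos_sq (2*x)
    nlinarith
  rw [hcos4]
  field_simp
  ring

/-- `∫_0^{π/2} x sin 2x /(x² + ln²(2 cos x)) dx = 13π/48`. -/
theorem integral_x_sin_div_two_cos :
    ∫ x in (0:ℝ)..(π/2),
        x * Real.sin (2 * x) / (x ^ 2 + Real.log (2 * Real.cos x) ^ 2)
    = 13 * π / 48 := by
  have hπ : (0:ℝ) ≤ π/2 := by positivity
  have hcongr : (∫ x in (0:ℝ)..(π/2), x * Real.sin (2*x) / (x^2 + Real.log (2*Real.cos x)^2))
      = ∫ x in (0:ℝ)..(π/2), (13/24 - 13/24 * Real.cos (4*x) - u x) := by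
    apply intervalIntegral.integral_congr
    intro x hx
    rw [Set.uIcc_of_le hπ] at hx
    exact pointwise_id hx
  rw [hcongr]
  have hcos : (∫ x in (0:ℝ)..(π/2), Real.cos (4*x)) = 0 := by
    have h := intervalIntegral.integral_comp_mul_left (a := (0:ℝ)) (b := π/2)
      (f := Real.cos) (c := 4) (by norm_num)
    rw [mul_zero, show (4:ℝ)*(π/2) = 2*π by ring] at h
    rw [h, integral_cos]
    simp [Real.sin_two_pi]
  have hcosc : Continuous (fun x : ℝ => 13/24*Real.cos (4*x)) :=
    continuous_const.mul (Real.continuous_cos.comp (continuous_const.mul continuous_id))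
  have hint1 : IntervalIntegrable (fun x : ℝ => 13/24 - 13/24*Real.cos (4*x))
      MeasureTheory.volume 0 (π/2) :=
    (continuous_const.sub hcosc).intervalIntegrable _ _
  have hintc : IntervalIntegrable (fun x : ℝ => 13/24*Real.cos (4*x))
      MeasureTheory.volume 0 (π/2) :=
    hcosc.intervalIntegrable _ _
  have hintu := u_cont.intervalIntegrable (μ := MeasureTheory.volume) 0 (π/2)
  rw [intervalIntegral.integral_sub hint1 hintu, int_u_half, sub_zero]
  rw [intervalIntegral.integral_sub (intervalIntegrable_const) hintc]
  rw [intervalIntegral.integral_const_mul, hcos, intervalIntegral.integral_const]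
  simp
  ring
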